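/- Let B⟨X⟩ be the free product of a unital ℂ-algebra B with ℂ⟨X⟩ and let δ = δ_{X:B} be the cyclic derivative. Then ker(δ) = B + [B⟨X⟩, B⟨X⟩], where [B⟨X⟩, B⟨X⟩] is the linear span of commutators. -/

import Mathlib

open scoped TensorProduct

noncomputable section

/-- `(A, ι, X)` is the free product `B *_ℂ ℂ⟨X⟩`, characterized by its universal
property: every algebra map `φ : B → C` together with a choice of element `x ∈ C`
extends uniquely to an algebra map `A → C` sending `X` to `x`. -/
def IsFreeProduct {B A : Type} [Ring B] [Algebra ℂ B] [Ring A] [Algebra ℂ A]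
    (ι : B →ₐ[ℂ] A) (X : A) : Prop :=
  ∀ (C : Type) [Ring C] [Algebra ℂ C], ∀ (φ : B →ₐ[ℂ] C) (x : C),
    ∃! ψ : A →ₐ[ℂ] C, ψ.comp ι = φ ∧ ψ X = x

/-- the monomial `b₀ X b₁ ⋯ X bₙ`, where `bs = [b₁, …, bₙ]`. -/
def mono {B A : Type} [Ring B] [Algebra ℂ B] [Ring A] [Algebra ℂ A]
    (ι : B →ₐ[ℂ] A) (X : A) (b0 : B) (bs : List B) : A :=
  ι b0 * (bs.map (fun b => X * ι b)).prod

/-- the cyclic derivative `δ = μ ∘ σ ∘ ∂` associated with a difference quotient `D`. -/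
def cyclicDer {A : Type} [Ring A] [Algebra ℂ A] (D : A →ₗ[ℂ] A ⊗[ℂ] A) : A →ₗ[ℂ] A :=
  (LinearMap.mul' ℂ A) ∘ₗ (TensorProduct.comm ℂ A A).toLinearMap ∘ₗ D

/-- the operation `u # b`, determined by `(a ⊗ c) # b = a b c`. -/
def sharp {A : Type} [Ring A] [Algebra ℂ A] (u : A ⊗[ℂ] A) (b : A) : A :=
  LinearMap.mul' ℂ A (u * (b ⊗ₜ[ℂ] (1 : A)))

/-- the divergence operator `∂* : u ↦ u # X`, i.e. `(a ⊗ c) ↦ a X c`. -/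
def divg {A : Type} [Ring A] [Algebra ℂ A] (X : A) : A ⊗[ℂ] A →ₗ[ℂ] A :=
  (LinearMap.mul' ℂ A) ∘ₗ (LinearMap.mulRight ℂ (X ⊗ₜ[ℂ] (1 : A)))

/-- the number operator `N = ∂* ∘ ∂`. -/
def numOp {A : Type} [Ring A] [Algebra ℂ A] (X : A) (D : A →ₗ[ℂ] A ⊗[ℂ] A) :
    A →ₗ[ℂ] A :=
  divg X ∘ₗ D

section Aux

variable {A : Type} [Ring A] [Algebra ℂ A]

lemma aux_musig (p : A) (u : A ⊗[ℂ] A) :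
    LinearMap.mul' ℂ A ((TensorProduct.comm ℂ A A) ((p ⊗ₜ[ℂ] (1 : A)) * u)) =
    LinearMap.mul' ℂ A ((TensorProduct.comm ℂ A A) (u * ((1 : A) ⊗ₜ[ℂ] p))) := by
  induction u using TensorProduct.induction_on with
  | zero => simp
  | tmul e f =>
      simp [Algebra.TensorProduct.tmul_mul_tmul, LinearMap.mul'_apply, mul_assoc]
  | add u v hu hv =>
      simp only [mul_add, add_mul, map_add, hu, hv]

lemma aux_divg_tmul (X a c : A) :
    divg (A := A) X (a ⊗ₜ[ℂ] c) = a * X * c := by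
  simp [divg, Algebra.TensorProduct.tmul_mul_tmul, LinearMap.mul'_apply, mul_assoc]

lemma aux_divg_left (X p : A) (u : A ⊗[ℂ] A) :
    divg (A := A) X ((p ⊗ₜ[ℂ] (1 : A)) * u) = p * divg X u := by
  induction u using TensorProduct.induction_on with
  | zero => simp
  | tmul e f =>
      simp [divg, Algebra.TensorProduct.tmul_mul_tmul, LinearMap.mul'_apply, mul_assoc]
  | add u v hu hv =>
      simp only [mul_add, map_add, hu, hv]

lemma aux_comm_mem (X : A) (u : A ⊗[ℂ] A) :
    LinearMap.mul' ℂ A (u * (X ⊗ₜ[ℂ] (1 : A))) -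
      X * LinearMap.mul' ℂ A ((TensorProduct.comm ℂ A A) u) ∈
      Submodule.span ℂ {x : A | ∃ p q : A, x = p * q - q * p} := by
  induction u using TensorProduct.induction_on with
  | zero => simp
  | tmul e f =>
      rw [Algebra.TensorProduct.tmul_mul_tmul]
      simp only [LinearMap.mul'_apply, TensorProduct.comm_tmul, mul_one]
      exact Submodule.subset_span ⟨e, X * f, by rw [mul_assoc, mul_assoc]⟩
  | add u v hu hv =>
      rw [add_mul, map_add, map_add, map_add, mul_add]
      have h := Submodule.add_mem _ hu hv
      convert h using 1
      abel

end Aux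

section MonoLemmas

variable {B A : Type} [Ring B] [Algebra ℂ B] [Ring A] [Algebra ℂ A]
  (ι : B →ₐ[ℂ] A) (X : A)

lemma mono_nil (b0 : B) : mono ι X b0 [] = ι b0 := by
  simp [mono]

lemma mono_cons (b0 c : B) (cs : List B) :
    mono ι X b0 (c :: cs) = ι b0 * (X * mono ι X c cs) := by
  simp [mono, mul_assoc]

lemma mono_mul (bs : List B) (b0 c0 : B) (cs : List B) :
    ∃ d ds, mono ι X b0 bs * mono ι X c0 cs = mono ι X d ds := by
  induction bs generalizing b0 with
  | nil =>
      refine ⟨b0 * c0, cs, ?_⟩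
      rw [mono_nil, mono, mono, map_mul, mul_assoc]
  | cons b bs ih =>
      obtain ⟨d, ds, hd⟩ := ih b
      refine ⟨b0, d :: ds, ?_⟩
      rw [mono_cons, mono_cons, ← hd, mul_assoc, mul_assoc]

end MonoLemmas

/-- The kernel of the cyclic derivative `δ_{X:B}` on `B⟨X⟩` equals
`B + [B⟨X⟩, B⟨X⟩]`. -/
theorem ker_cyclicDer_eq
    {B A : Type} [Ring B] [Algebra ℂ B] [Ring A] [Algebra ℂ A]
    (ι : B →ₐ[ℂ] A) (X : A) (hfree : IsFreeProduct ι X)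
    (D : A →ₗ[ℂ] A ⊗[ℂ] A)
    (hD : ∀ p q : A, D (p * q) = (p ⊗ₜ[ℂ] (1 : A)) * D q + D p * ((1 : A) ⊗ₜ[ℂ] q))
    (hDX : D X = (1 : A) ⊗ₜ[ℂ] (1 : A))
    (hDB : ∀ b : B, D (ι b) = 0) :
    LinearMap.ker (cyclicDer D) =
      LinearMap.range ι.toLinearMap ⊔
        Submodule.span ℂ {x : A | ∃ p q : A, x = p * q - q * p} := by
  set Cs : Submodule ℂ A := Submodule.span ℂ {x : A | ∃ p q : A, x = p * q - q * p} with hCs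
  have hδmul : ∀ p q : A, cyclicDer D (p * q) = cyclicDer D (q * p) := by
    intro p q
    simp only [cyclicDer, LinearMap.comp_apply, LinearEquiv.coe_toLinearMap, hD p q, hD q p,
      map_add]
    rw [aux_musig p (D q), aux_musig q (D p), add_comm]
  have heasy : LinearMap.range ι.toLinearMap ⊔ Cs ≤ LinearMap.ker (cyclicDer D) := by
    refine sup_le ?_ ?_
    · rintro x ⟨b, rfl⟩
      simp only [LinearMap.mem_ker, AlgHom.toLinearMap_apply, cyclicDer,
        LinearMap.comp_apply, hDB b, map_zero]
    · rw [hCs, Submodule.span_le]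
      rintro x ⟨p, q, rfl⟩
      simp only [SetLike.mem_coe, LinearMap.mem_ker, map_sub, hδmul p q, sub_self]
  have hgen : Algebra.adjoin ℂ (Set.range ι ∪ {X}) = ⊤ := by
    set A' := Algebra.adjoin ℂ (Set.range ι ∪ {X}) with hA'
    have hιmem : ∀ b : B, ι b ∈ A' := fun b =>
      Algebra.subset_adjoin (Or.inl ⟨b, rfl⟩)
    have hXmem : X ∈ A' := Algebra.subset_adjoin (Or.inr rfl)
    obtain ⟨ψ, ⟨hψι, hψX⟩, -⟩ :=
      hfree A' (ι.codRestrict A' hιmem) (⟨X, hXmem⟩ : A')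
    obtain ⟨ψ₀, -, huniq⟩ := hfree A ι X
    have h1 : A'.val.comp ψ = ψ₀ := by
      refine huniq _ ⟨?_, ?_⟩
      · ext b
        have := congrArg (fun f => A'.val (f b)) hψι
        simpa using this
      · simp [hψX]
    have h2 : AlgHom.id ℂ A = ψ₀ := huniq _ ⟨by ext b; simp, rfl⟩
    have h3 : A'.val.comp ψ = AlgHom.id ℂ A := h1.trans h2.symm
    rw [hA', eq_top_iff]
    intro a _
    have : A'.val (ψ a) = a := congrArg (fun f => f a) h3
    rw [← this]
    exact (ψ a).2
  set Mono : Set A := {y : A | ∃ b0 bs, y = mono ι X b0 bs} with hMono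
  have hspan : Submodule.span ℂ Mono = ⊤ := by
    rw [eq_top_iff]
    intro a _
    have ha' : a ∈ Algebra.adjoin ℂ (Set.range ι ∪ {X}) := by rw [hgen]; trivial
    have hmulmem : ∀ x ∈ Submodule.span ℂ Mono, ∀ y ∈ Submodule.span ℂ Mono,
        x * y ∈ Submodule.span ℂ Mono := by
      intro x hx
      refine Submodule.span_induction (p := fun x _ => ∀ y ∈ Submodule.span ℂ Mono,
        x * y ∈ Submodule.span ℂ Mono) ?_ ?_ ?_ ?_ hx
      · rintro x ⟨b0, bs, rfl⟩ y hy
        refine Submodule.span_induction (p := fun y _ => mono ι X b0 bs * y ∈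
          Submodule.span ℂ Mono) ?_ ?_ ?_ ?_ hy
        · rintro y ⟨c0, cs, rfl⟩
          obtain ⟨d, ds, hd⟩ := mono_mul ι X bs b0 c0 cs
          rw [hd]
          exact Submodule.subset_span ⟨d, ds, rfl⟩
        · simp
        · intro y z _ _ h1 h2
          rw [mul_add]; exact Submodule.add_mem _ h1 h2
        · intro c y _ h1
          rw [mul_smul_comm]; exact Submodule.smul_mem _ _ h1
      · intro y _; simp
      · intro x y _ _ h1 h2 z hz
        rw [add_mul]; exact Submodule.add_mem _ (h1 z hz) (h2 z hz)
      · intro c x _ h1 z hz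
        rw [smul_mul_assoc]; exact Submodule.smul_mem _ _ (h1 z hz)
    refine Algebra.adjoin_induction ?_ ?_ ?_ ?_ ha'
    · rintro x (⟨b, rfl⟩ | rfl)
      · exact Submodule.subset_span ⟨b, [], (mono_nil ι X b).symm⟩
      · refine Submodule.subset_span ⟨1, [1], ?_⟩
        simp [mono]
    · intro r
      rw [Algebra.algebraMap_eq_smul_one]
      refine Submodule.smul_mem _ _ (Submodule.subset_span ⟨1, [], ?_⟩)
      simp [mono]
    · intro x y _ _ h1 h2
      exact Submodule.add_mem _ h1 h2
    · intro x y hx hy h1 h2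
      exact hmulmem x h1 y h2
  obtain ⟨θ, ⟨hθι, hθX⟩, -⟩ :=
    hfree (Polynomial A) ((Polynomial.CAlgHom (R := ℂ)).comp ι)
      (Polynomial.C X * Polynomial.X)
  have hθb : ∀ b : B, θ (ι b) = Polynomial.C (ι b) := by
    intro b
    have := congrArg (fun f => f b) hθι
    simpa [Polynomial.CAlgHom] using this
  have hθmono : ∀ bs (b0 : B),
      θ (mono ι X b0 bs) = Polynomial.monomial bs.length (mono ι X b0 bs) := by
    intro bs
    induction bs with
    | nil =>
        intro b0
        rw [mono_nil, hθb]
        simp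
    | cons c cs ih =>
        intro b0
        rw [mono_cons, map_mul, map_mul, hθb, hθX, ih c,
          ← Polynomial.C_mul_X_pow_eq_monomial, ← Polynomial.C_mul_X_pow_eq_monomial,
          List.length_cons, map_mul, map_mul]
        have key2 : Polynomial.X * (Polynomial.C (mono ι X c cs) * Polynomial.X ^ cs.length) =
            Polynomial.C (mono ι X c cs) * Polynomial.X ^ (cs.length + 1) := by
          rw [← mul_assoc, (Polynomial.commute_X (Polynomial.C (mono ι X c cs))).eq,
            mul_assoc, ← pow_succ']
        simp only [mul_assoc, key2]
  have hNmono : ∀ bs (b0 : B),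
      numOp X D (mono ι X b0 bs) = (bs.length : ℂ) • mono ι X b0 bs := by
    intro bs
    induction bs with
    | nil =>
        intro b0
        simp [numOp, mono_nil, hDB b0]
    | cons c cs ih =>
        intro b0
        have hDXm : D (X * mono ι X c cs) =
            (X ⊗ₜ[ℂ] (1:A)) * D (mono ι X c cs) + (1:A) ⊗ₜ[ℂ] (mono ι X c cs) := by
          rw [hD X (mono ι X c cs), hDX, Algebra.TensorProduct.tmul_mul_tmul, one_mul,
            one_mul]
        have hDm : D (mono ι X b0 (c :: cs)) =
            ((ι b0 * X) ⊗ₜ[ℂ] (1:A)) * D (mono ι X c cs) + (ι b0) ⊗ₜ[ℂ] (mono ι X c cs) := by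
          rw [mono_cons, hD (ι b0) (X * mono ι X c cs), hDB b0, zero_mul, add_zero, hDXm,
            mul_add, ← mul_assoc, Algebra.TensorProduct.tmul_mul_tmul, mul_one,
            Algebra.TensorProduct.tmul_mul_tmul, mul_one, one_mul]
        have hstep : numOp X D (mono ι X b0 (c :: cs)) =
            (ι b0 * X) * (numOp X D (mono ι X c cs)) + ι b0 * X * mono ι X c cs := by
          show divg X (D (mono ι X b0 (c :: cs))) = _
          rw [hDm, map_add, aux_divg_left, aux_divg_tmul]
          rfl
        rw [hstep, ih c, mono_cons, List.length_cons]
        push_cast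
        simp only [mul_smul_comm, add_smul, one_smul, mul_assoc]
  have hNCs : ∀ a ∈ LinearMap.ker (cyclicDer D), numOp X D a ∈ Cs := by
    intro a ha
    have hδa : cyclicDer D a = 0 := ha
    have key := aux_comm_mem X (D a)
    have h2 : cyclicDer D a = LinearMap.mul' ℂ A ((TensorProduct.comm ℂ A A) (D a)) := rfl
    rw [← h2, hδa, mul_zero, sub_zero] at key
    exact key
  have hπC : ∀ x ∈ Cs, ∀ n : ℕ, (θ x).coeff n ∈ Cs := by
    intro x hx
    refine Submodule.span_induction (p := fun x _ => ∀ n : ℕ, (θ x).coeff n ∈ Cs)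
      ?_ ?_ ?_ ?_ hx
    · rintro x ⟨p, q, rfl⟩ n
      rw [map_sub, map_mul, map_mul, Polynomial.coeff_sub, Polynomial.coeff_mul,
        Polynomial.coeff_mul]
      have hswap : ∑ ij ∈ Finset.HasAntidiagonal.antidiagonal n, (θ q).coeff ij.1 * (θ p).coeff ij.2 =
          ∑ ij ∈ Finset.HasAntidiagonal.antidiagonal n, (θ q).coeff ij.2 * (θ p).coeff ij.1 := by
        have h0 := Finset.Nat.sum_antidiagonal_swap (n := n)
          (f := fun ij => (θ q).coeff ij.1 * (θ p).coeff ij.2)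
        simp only [Prod.fst_swap, Prod.snd_swap] at h0
        exact h0.symm
      rw [hswap, ← Finset.sum_sub_distrib]
      refine Submodule.sum_mem _ ?_
      intro ij _
      exact Submodule.subset_span ⟨(θ p).coeff ij.1, (θ q).coeff ij.2, rfl⟩
    · intro n; simp
    · intro x y _ _ h1 h2 n
      rw [map_add, Polynomial.coeff_add]
      exact Submodule.add_mem _ (h1 n) (h2 n)
    · intro c x _ h1 n
      rw [map_smul, Polynomial.coeff_smul]
      exact Submodule.smul_mem _ _ (h1 n)
  have hπN : ∀ a : A, ∀ n : ℕ, (θ (numOp X D a)).coeff n = (n : ℂ) • (θ a).coeff n := by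
    intro a n
    have ha : a ∈ Submodule.span ℂ Mono := hspan ▸ Submodule.mem_top
    refine Submodule.span_induction
      (p := fun a _ => (θ (numOp X D a)).coeff n = (n : ℂ) • (θ a).coeff n) ?_ ?_ ?_ ?_ ha
    · rintro x ⟨b0, bs, rfl⟩
      rw [hNmono bs b0, map_smul, Polynomial.coeff_smul, hθmono bs b0,
        Polynomial.coeff_monomial]
      by_cases h : bs.length = n
      · subst h; rfl
      · simp [h]
    · simp
    · intro x y _ _ h1 h2
      simp only [map_add, Polynomial.coeff_add, h1, h2, smul_add]
    · intro c x _ h1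
      rw [map_smul, map_smul, map_smul, Polynomial.coeff_smul, Polynomial.coeff_smul, h1,
        smul_comm]
  have hπ0 : ∀ a : A, (θ a).coeff 0 ∈ LinearMap.range ι.toLinearMap := by
    intro a
    have ha : a ∈ Submodule.span ℂ Mono := hspan ▸ Submodule.mem_top
    refine Submodule.span_induction
      (p := fun a _ => (θ a).coeff 0 ∈ LinearMap.range ι.toLinearMap) ?_ ?_ ?_ ?_ ha
    · rintro x ⟨b0, bs, rfl⟩
      rw [hθmono bs b0, Polynomial.coeff_monomial]
      cases bs with
      | nil => simpa [mono_nil] using ⟨b0, rfl⟩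
      | cons c cs => simp
    · simp
    · intro x y _ _ h1 h2
      rw [map_add, Polynomial.coeff_add]
      exact Submodule.add_mem _ h1 h2
    · intro c x _ h1
      rw [map_smul, Polynomial.coeff_smul]
      exact Submodule.smul_mem _ _ h1
  have hEval : ∀ a : A, Polynomial.eval 1 (θ a) = a := by
    intro a
    have ha : a ∈ Submodule.span ℂ Mono := hspan ▸ Submodule.mem_top
    refine Submodule.span_induction
      (p := fun a _ => Polynomial.eval 1 (θ a) = a) ?_ ?_ ?_ ?_ ha
    · rintro x ⟨b0, bs, rfl⟩
      rw [hθmono bs b0, Polynomial.eval_monomial, one_pow, mul_one]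
    · simp
    · intro x y _ _ h1 h2
      rw [map_add, Polynomial.eval_add, h1, h2]
    · intro c x _ h1
      rw [map_smul, Polynomial.eval_smul, h1]
  refine le_antisymm ?_ heasy
  intro a ha
  have hsum : a = ∑ n ∈ (θ a).support, (θ a).coeff n := by
    conv_lhs => rw [← hEval a]
    rw [Polynomial.eval_eq_sum, Polynomial.sum_def]
    simp
  rw [hsum]
  refine Submodule.sum_mem _ ?_
  intro n _
  cases n with
  | zero =>
      exact Submodule.mem_sup_left (hπ0 a)
  | succ k =>
      refine Submodule.mem_sup_right ?_
      have h1 : ((k + 1 : ℕ) : ℂ) • (θ a).coeff (k + 1) ∈ Cs := by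
        rw [← hπN a (k + 1)]
        exact hπC _ (hNCs a ha) (k + 1)
      have h2 : ((k + 1 : ℕ) : ℂ) ≠ 0 := Nat.cast_ne_zero.mpr (Nat.succ_ne_zero k)
      have h3 := Submodule.smul_mem Cs (((k + 1 : ℕ) : ℂ))⁻¹ h1
      rwa [inv_smul_smul₀ h2] at h3
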